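/- Let T be a weak Kohnert diagram that is not a generic Kohnert diagram. Then T has a unique removable column c, and c > 1; moreover, c is characterized by the two conditions: min_r m_T(c, r) = −1, and m_T(i, j) ≥ 0 for every column index i > 1 with i ≠ c and every row index j. In particular, T has a unique highest removable cell and a unique lowest removable cell. -/

import Mathlib

attribute [local instance] Classical.propDecidable

/-- A diagram: a set of cells `(column, row)` with positive coordinates. -/
abbrev Diagram : Type := Set (ℕ × ℕ)

/-- The key diagram of a weak composition `a` (parts indexed from 1). -/
def keyDiagram (a : ℕ → ℕ) : Diagram := {p | 1 ≤ p.1 ∧ 1 ≤ p.2 ∧ p.1 ≤ a p.2}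

/-- A single Kohnert move: the rightmost cell of some row drops within its column to
the first unoccupied position below it. -/
def KohnertMove (T S : Diagram) : Prop :=
  ∃ c r r', (c, r) ∈ T ∧ (∀ c', (c', r) ∈ T → c' ≤ c) ∧
    1 ≤ r' ∧ r' < r ∧ (c, r') ∉ T ∧ (∀ s, r' < s → s < r → (c, s) ∈ T) ∧
    S = insert (c, r') (T \ {(c, r)})

/-- The set of Kohnert diagrams of a weak composition. -/
def KD (a : ℕ → ℕ) : Set Diagram :=
  {T | Relation.ReflTransGen KohnertMove (keyDiagram a) T}

/-- Row weight: the number of cells in each row. -/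
noncomputable def rowWeight (T : Diagram) : ℕ → ℕ :=
  fun r => {p : ℕ × ℕ | p ∈ T ∧ p.2 = r}.ncard

/-- Column weight: the number of cells in each column. -/
noncomputable def colWeight (T : Diagram) : ℕ → ℕ :=
  fun c => {p : ℕ × ℕ | p ∈ T ∧ p.1 = c}.ncard

/-- The weak composition with a single part `1` in position `j`. -/
def eComp (j : ℕ) : ℕ → ℕ := fun i => if i = j then 1 else 0

/-- Exchange parts `i` and `j` of a weak composition. -/
def swapParts (a : ℕ → ℕ) (i j : ℕ) : ℕ → ℕ :=
  fun t => if t = i then a j else if t = j then a i else a t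

/-- A single left swap: exchange two parts `a i < a j` with `i < j`. -/
def LSwapStep (a b : ℕ → ℕ) : Prop :=
  ∃ i j, 1 ≤ i ∧ i < j ∧ a i < a j ∧ b = swapParts a i j

/-- Left swap order: `b ⪯ a`. -/
def LswapLE (b a : ℕ → ℕ) : Prop := Relation.ReflTransGen LSwapStep a b

/-- A generic Kohnert diagram: a Kohnert diagram of some weak composition. -/
def GenericKD (T : Diagram) : Prop :=
  ∃ a : ℕ → ℕ, (∃ n, ∀ i, n < i → a i = 0) ∧ T ∈ KD a

/-- The target space `D(a,k)`: union of `KD (b + e j)` over `b ⪯ a` and `1 ≤ j ≤ k`. -/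
def Dset (a : ℕ → ℕ) (k : ℕ) : Set Diagram :=
  {T | ∃ b j, LswapLE b a ∧ 1 ≤ j ∧ j ≤ k ∧ T ∈ KD (b + eComp j)}

/-- `(c,r)` is an addable cell for `a`. -/
def Addable (a : ℕ → ℕ) (c r : ℕ) : Prop :=
  1 ≤ c ∧ 1 ≤ r ∧ a r < c ∧ ∃ s, r ≤ s ∧ a s = c - 1

/-- `(c,r)` is a `k`-addable cell for `a`. -/
def KAddable (a : ℕ → ℕ) (k c r : ℕ) : Prop :=
  1 ≤ c ∧ 1 ≤ r ∧ r ≤ k ∧ a r < c ∧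
    (a r < c - 1 → ∃ l, k < l ∧ a l = c - 1) ∧
    (∀ i, r < i → i ≤ k → a i < a r ∨ c ≤ a i)

/-- Apply the transpositions `t_{r0,r1} t_{r1,r2} ⋯` (rightmost first) to `a`. -/
def applyTranspositions (a : ℕ → ℕ) : List ℕ → (ℕ → ℕ)
  | [] => a
  | [_] => a
  | r0 :: r1 :: rest => swapParts (applyTranspositions a (r1 :: rest)) r0 r1

/-- The increasing chain of row indices `r = r₀ < r₁ < ⋯ < r_q` used to construct
the maximal support composition for `a` at `(c,r)`: at each step, the next index is
the first position carrying the smallest part exceeding the current one and at most `c-1`. -/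
noncomputable def suppChain (a : ℕ → ℕ) (c : ℕ) : ℕ → ℕ → List ℕ
  | 0, r => [r]
  | fuel + 1, r =>
    if (∃ s, r < s ∧ a r < a s ∧ a s ≤ c - 1) then
      r :: suppChain a c fuel (sInf {s | r < s ∧ a r < a s ∧ a s ≤ c - 1})
    else [r]

/-- The maximal support composition for `a` at `(c,r)`. -/
noncomputable def suppComp (a : ℕ → ℕ) (c r : ℕ) : ℕ → ℕ :=
  applyTranspositions a (suppChain a c c r)

/-- The maximal drop composition for `a` in column `c` at the set of rows `R`. -/
noncomputable def dropComp (a : ℕ → ℕ) (c : ℕ) (R : Finset ℕ) : ℕ → ℕ :=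
  applyTranspositions (suppComp a c (sSup (R : Set ℕ))) (R.sort (· ≤ ·))

/-- The key polynomial of a weak composition. -/
noncomputable def keyPoly (a : ℕ → ℕ) : MvPolynomial ℕ ℤ :=
  ∑ᶠ T ∈ KD a, ∏ᶠ i : ℕ, (MvPolynomial.X i : MvPolynomial ℕ ℤ) ^ rowWeight T i

/-- A matching sequence on a diagram `T`: edges `(x, y)` mean `x` (in column `i+1`)
matches to `y` (in column `i`, weakly higher row); every cell outside column 1 is matched,
sources and targets are unique. -/
def IsMatchingSeq (T : Diagram) (M : Set ((ℕ × ℕ) × (ℕ × ℕ))) : Prop :=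
  (∀ p ∈ M, p.1 ∈ T ∧ p.2 ∈ T ∧ 2 ≤ p.1.1 ∧ p.2.1 + 1 = p.1.1 ∧ p.1.2 ≤ p.2.2) ∧
  (∀ x y y' : ℕ × ℕ, (x, y) ∈ M → (x, y') ∈ M → y = y') ∧
  (∀ x x' y : ℕ × ℕ, (x, y) ∈ M → (x', y) ∈ M → x = x') ∧
  (∀ x ∈ T, 2 ≤ x.1 → ∃ y, (x, y) ∈ M)

/-- The anchor weight of a matching sequence: its `i`-th part is the number of cells
on the path of `M` terminating at the column-1 cell in row `i`. -/
noncomputable def anchorWeight (T : Diagram) (M : Set ((ℕ × ℕ) × (ℕ × ℕ))) : ℕ → ℕ :=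
  fun i =>
    {x : ℕ × ℕ | x ∈ T ∧ Relation.ReflTransGen (fun u v => (u, v) ∈ M) x (1, i)}.ncard

/-- `m_T(c,r)`. -/
noncomputable def mval (T : Diagram) (c r : ℕ) : ℤ :=
  ({p : ℕ × ℕ | p ∈ T ∧ p.1 = c - 1 ∧ r ≤ p.2}.ncard : ℤ) -
    ({p : ℕ × ℕ | p ∈ T ∧ p.1 = c ∧ r ≤ p.2}.ncard : ℤ)

/-- One rectification step. -/
noncomputable def rho (T : Diagram) : Diagram :=
  if ∀ c r, 1 < c → 1 ≤ r → 0 ≤ mval T c r then T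
  else
    let c := sInf {c | 1 < c ∧ ∃ r, 1 ≤ r ∧ mval T c r < 0}
    let r := sSup {r | 1 ≤ r ∧ ∀ r', 1 ≤ r' → mval T c r ≤ mval T c r'}
    insert (c - 1, r) (T \ {(c, r)})

/-- Rectification: iterate `rho` until it stabilizes. -/
noncomputable def rectify (T : Diagram) : Diagram :=
  if h : ∃ m, rho^[m + 1] T = rho^[m] T then rho^[h.choose] T else T

/-- Bottom insertion `Δ₁`: add a cell at the leftmost empty position of row 1. -/
noncomputable def bottomInsert (T : Diagram) : Diagram :=
  insert (sInf {i | 1 ≤ i ∧ (i, 1) ∉ T}, 1) T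

/-- Top insertion `Δ∞`: add a cell in row `j` beyond the last occupied column
and rectify. -/
noncomputable def topInsert (T : Diagram) (j : ℕ) : Diagram :=
  rectify (insert (sSup {c | ∃ r, (c, r) ∈ T} + 1, j) T)

/-- `x` is a removable cell of `T`. -/
def Removable (T : Diagram) (x : ℕ × ℕ) : Prop := x ∈ T ∧ GenericKD (T \ {x})

/-- A weak Kohnert diagram: a diagram with a removable cell. -/
def WeakKD (T : Diagram) : Prop := ∃ x, Removable T x

/-- `c` is a removable column of `T`. -/
def IsRemovableCol (T : Diagram) (c : ℕ) : Prop := ∃ x, Removable T x ∧ x.1 = c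

/-- The cells of the thread of `S` starting at the cell in column `j` and row `r`. -/
noncomputable def threadCells (S : Diagram) : ℕ → ℕ → Diagram
  | 0, _ => ∅
  | j + 1, r =>
    insert (j + 1, r)
      (if (∃ s, r ≤ s ∧ (j, s) ∈ S) then
        threadCells S j (sInf {s | r ≤ s ∧ (j, s) ∈ S})
      else ∅)

/-- Extract the first thread of `S`: start at the lowest cell of the rightmost column. -/
noncomputable def extractThread (S : Diagram) : Diagram :=
  threadCells S (sSup {c | ∃ r, (c, r) ∈ S})
    (sInf {r | (sSup {c | ∃ r', (c, r') ∈ S}, r) ∈ S})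

/-- The list of threads of the thread decomposition (with fuel). -/
noncomputable def threadList : ℕ → Diagram → List Diagram
  | 0, _ => []
  | fuel + 1, S =>
    if S = ∅ then [] else extractThread S :: threadList fuel (S \ extractThread S)

/-- The thread weight `θ(T)`: its `i`-th part is the number of cells of the thread
whose column-1 cell lies in row `i`. -/
noncomputable def threadWeight (T : Diagram) : ℕ → ℕ :=
  fun i => ∑ᶠ th ∈ {th : Diagram | th ∈ threadList T.ncard T ∧ (1, i) ∈ th}, th.ncard

/-- The target space `D^(m)(a,k)`. -/
def DsetM (a : ℕ → ℕ) (k m : ℕ) : Set Diagram :=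
  {T | ∃ (bs : ℕ → ℕ → ℕ) (js : ℕ → ℕ),
      LswapLE (bs 0) a ∧
      (∀ i, 1 ≤ i → i ≤ m → 1 ≤ js i ∧ js i ≤ k ∧
        LswapLE (bs i) (bs (i - 1) + eComp (js i))) ∧
      (∀ i i', 1 ≤ i → i < i' → i' ≤ m → bs i (js i) ≠ bs i' (js i')) ∧
      T ∈ KD (bs m)}

/-- The sum of all monomials of degree `m` in `x_1, …, x_k`. -/
noncomputable def hPoly (k m : ℕ) : MvPolynomial ℕ ℤ :=
  ∑ s ∈ (Finset.Icc 1 k).sym m, (Multiset.map MvPolynomial.X s.val).prod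

/-- Semistandard Young tableaux of shape `lam` with entries in `{1, …, n}`,
encoded as `f row col = entry` (0 outside the shape, rows/columns indexed from 1). -/
def IsSSYT (n : ℕ) (lam : ℕ → ℕ) (f : ℕ → ℕ → ℕ) : Prop :=
  (∀ i c, f i c ≠ 0 ↔ (1 ≤ i ∧ 1 ≤ c ∧ c ≤ lam i)) ∧
  (∀ i c, f i c ≤ n) ∧
  (∀ i c, 1 ≤ i → 1 ≤ c → c + 1 ≤ lam i → f i c ≤ f i (c + 1)) ∧
  (∀ i c, 1 ≤ i → 1 ≤ c → c ≤ lam (i + 1) → f i c < f (i + 1) c)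

/-- The column of row `i` at which `x` is inserted by RSK row insertion. -/
noncomputable def bumpCol (f : ℕ → ℕ → ℕ) (i x : ℕ) : ℕ :=
  sInf {c | 1 ≤ c ∧ (f i c = 0 ∨ x < f i c)}

/-- RSK row insertion, with fuel. -/
noncomputable def rskAux : ℕ → (ℕ → ℕ → ℕ) → ℕ → ℕ → (ℕ → ℕ → ℕ)
  | 0, f, _, _ => f
  | fuel + 1, f, i, x =>
    let c := bumpCol f i x
    let y := f i c
    let f' : ℕ → ℕ → ℕ := fun i' c' => if i' = i ∧ c' = c then x else f i' c'
    if y = 0 then f' else rskAux fuel f' (i + 1) y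

/-- RSK row insertion of the entry `x` into a tableau with entries at most `n`. -/
noncomputable def RSKinsert (n : ℕ) (f : ℕ → ℕ → ℕ) (x : ℕ) : ℕ → ℕ → ℕ :=
  rskAux (n + 1) f 1 x

/-- The map `𝔻`: the tableau cell in column `c` with entry `v` becomes the diagram
cell `(c, n + 1 - v)`. -/
def toDiagram (n : ℕ) (f : ℕ → ℕ → ℕ) : Diagram :=
  {p | ∃ i, 1 ≤ i ∧ f i p.1 ≠ 0 ∧ p.2 + f i p.1 = n + 1}

noncomputable def Ncnt (T : Diagram) (c j : ℕ) : ℕ :=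
  {p : ℕ × ℕ | p ∈ T ∧ p.1 = c ∧ j ≤ p.2}.ncard

lemma mval_eq (T : Diagram) (c r : ℕ) :
    mval T c r = (Ncnt T (c-1) r : ℤ) - Ncnt T c r := rfl

lemma Ncnt_set_fin {T : Diagram} (hT : T.Finite) (c j : ℕ) :
    {p : ℕ × ℕ | p ∈ T ∧ p.1 = c ∧ j ≤ p.2}.Finite :=
  hT.subset (fun p hp => hp.1)

lemma Ncnt_step {T : Diagram} (hT : T.Finite) (c j : ℕ) :
    Ncnt T c j = Ncnt T c (j+1) + (if (c, j) ∈ T then 1 else 0) := by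
  unfold Ncnt
  split_ifs with h
  · have hset : {p : ℕ × ℕ | p ∈ T ∧ p.1 = c ∧ j ≤ p.2} =
        insert (c, j) {p : ℕ × ℕ | p ∈ T ∧ p.1 = c ∧ j + 1 ≤ p.2} := by
      ext ⟨a, b⟩
      simp only [Set.mem_setOf_eq, Set.mem_insert_iff, Prod.mk.injEq]
      constructor
      · rintro ⟨h1, rfl, h3⟩
        rcases eq_or_lt_of_le h3 with h4 | h4
        · exact Or.inl ⟨rfl, h4.symm⟩
        · exact Or.inr ⟨h1, rfl, h4⟩
      · rintro (⟨rfl, rfl⟩ | ⟨h1, rfl, h3⟩)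
        · exact ⟨h, rfl, le_refl _⟩
        · exact ⟨h1, rfl, le_trans (Nat.le_succ j) h3⟩
    rw [hset, Set.ncard_insert_of_notMem (by simp) (Ncnt_set_fin hT c (j+1))]
  · have hset : {p : ℕ × ℕ | p ∈ T ∧ p.1 = c ∧ j ≤ p.2} =
        {p : ℕ × ℕ | p ∈ T ∧ p.1 = c ∧ j + 1 ≤ p.2} := by
      ext ⟨a, b⟩
      simp only [Set.mem_setOf_eq]
      constructor
      · rintro ⟨h1, rfl, h3⟩
        refine ⟨h1, rfl, ?_⟩
        rcases eq_or_lt_of_le h3 with h4 | h4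
        · exact absurd (h4 ▸ h1) h
        · exact h4
      · rintro ⟨h1, rfl, h3⟩
        exact ⟨h1, rfl, le_trans (Nat.le_succ j) h3⟩
    rw [hset]; ring

lemma Ncnt_le {T : Diagram} (hT : T.Finite) (c j : ℕ) : ∀ d, Ncnt T c j ≤ Ncnt T c (j + d) + d := by
  intro d
  induction d generalizing j with
  | zero => simp
  | succ d ih =>
    have h1 := Ncnt_step hT c j
    have h2 := ih (j+1)
    have : j + 1 + d = j + (d + 1) := by omega
    rw [this] at h2
    split_ifs at h1 <;> omega

lemma Ncnt_full {T : Diagram} (hT : T.Finite) (c j : ℕ) :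
    ∀ d, (∀ s, j ≤ s → s < j + d → (c, s) ∈ T) → Ncnt T c j = Ncnt T c (j + d) + d := by
  intro d
  induction d generalizing j with
  | zero => simp
  | succ d ih =>
    intro hfull
    have h1 := Ncnt_step hT c j
    rw [if_pos (hfull j le_rfl (by omega))] at h1
    have h2 := ih (j+1) (fun s hs hs' => hfull s (by omega) (by omega))
    have : j + 1 + d = j + (d + 1) := by omega
    rw [this] at h2
    omega

lemma Ncnt_insert {T : Diagram} (hT : T.Finite) {x : ℕ × ℕ} (hx : x ∉ T) (c j : ℕ) :
    Ncnt (insert x T) c j = Ncnt T c j + (if x.1 = c ∧ j ≤ x.2 then 1 else 0) := by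
  unfold Ncnt
  split_ifs with h
  · have hset : {p : ℕ × ℕ | p ∈ insert x T ∧ p.1 = c ∧ j ≤ p.2} =
        insert x {p : ℕ × ℕ | p ∈ T ∧ p.1 = c ∧ j ≤ p.2} := by
      ext p
      simp only [Set.mem_setOf_eq, Set.mem_insert_iff]
      constructor
      · rintro ⟨(rfl | h1), h2, h3⟩
        · exact Or.inl rfl
        · exact Or.inr ⟨h1, h2, h3⟩
      · rintro (rfl | ⟨h1, h2, h3⟩)
        · exact ⟨Or.inl rfl, h.1, h.2⟩
        · exact ⟨Or.inr h1, h2, h3⟩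
    rw [hset, Set.ncard_insert_of_notMem (fun hc => hx hc.1) (Ncnt_set_fin hT c j)]
  · have hset : {p : ℕ × ℕ | p ∈ insert x T ∧ p.1 = c ∧ j ≤ p.2} =
        {p : ℕ × ℕ | p ∈ T ∧ p.1 = c ∧ j ≤ p.2} := by
      ext p
      simp only [Set.mem_setOf_eq, Set.mem_insert_iff]
      constructor
      · rintro ⟨(rfl | h1), h2, h3⟩
        · exact absurd ⟨h2, h3⟩ h
        · exact ⟨h1, h2, h3⟩
      · rintro ⟨h1, h2, h3⟩
        exact ⟨Or.inr h1, h2, h3⟩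
    rw [hset]; ring

lemma Ncnt_remove {T : Diagram} (hT : T.Finite) {y : ℕ × ℕ} (hy : y ∈ T) (c j : ℕ) :
    Ncnt T c j = Ncnt (T \ {y}) c j + (if y.1 = c ∧ j ≤ y.2 then 1 else 0) := by
  have h1 : insert y (T \ {y}) = T := by
    rw [Set.insert_diff_singleton, Set.insert_eq_self.mpr hy]
  have h2 := Ncnt_insert (x := y) (hT.diff (t := {y})) (by simp) c j
  rw [h1] at h2
  exact h2

def Mnn (T : Diagram) : Prop := ∀ i j, 1 < i → 1 ≤ j → 0 ≤ mval T i j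

def Good (T : Diagram) : Prop :=
  T.Finite ∧ (∀ p ∈ T, 1 ≤ p.1 ∧ 1 ≤ p.2) ∧ Mnn T

lemma good_key {a : ℕ → ℕ} (hbd : ∃ n, ∀ i, n < i → a i = 0) : Good (keyDiagram a) := by
  obtain ⟨n, hn⟩ := hbd
  have hmem : ∀ c r : ℕ, (c, r) ∈ keyDiagram a ↔ 1 ≤ c ∧ 1 ≤ r ∧ c ≤ a r := by
    intro c r; rfl
  have hfin : (keyDiagram a).Finite := by
    apply Set.Finite.subset ((Set.finite_Icc 1 ((Finset.range (n+1)).sup a)).prod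
      (Set.finite_Icc 1 n))
    rintro ⟨c, r⟩ hp
    rw [hmem] at hp
    obtain ⟨h1, h2, h3⟩ := hp
    have hrn : r ≤ n := by
      by_contra hr
      have h4 := hn r (by omega)
      omega
    exact ⟨⟨h1, le_trans h3 (Finset.le_sup (by simp [Nat.lt_succ_iff, hrn]))⟩, ⟨h2, hrn⟩⟩
  refine ⟨hfin, fun p hp => ⟨hp.1, hp.2.1⟩, ?_⟩
  intro i j hi hj
  rw [mval_eq]
  have hle : Ncnt (keyDiagram a) i j ≤ Ncnt (keyDiagram a) (i-1) j := by
    refine Set.ncard_le_ncard_of_injOn (fun p => (i-1, p.2)) ?_ ?_ (Ncnt_set_fin hfin _ _)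
    · rintro ⟨c, r⟩ ⟨hk, h2, h3⟩
      simp only [Set.mem_setOf_eq] at h2 h3
      subst h2
      obtain ⟨q1, q2, q3⟩ := (hmem c r).mp hk
      exact ⟨(hmem (c-1) r).mpr ⟨by omega, q2, by omega⟩, rfl, h3⟩
    · rintro ⟨c, r⟩ ⟨_, h2, _⟩ ⟨c', r'⟩ ⟨_, h2', _⟩ heq
      simp only [Set.mem_setOf_eq] at h2 h2'
      simp only [Prod.mk.injEq] at heq
      exact Prod.ext (h2.trans h2'.symm) heq.2
  omega

lemma forward_key {T : Diagram} (hG : Good T) {c r r' j : ℕ} (hc : 1 ≤ c)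
    (hcell : (c, r) ∈ T) (hright : (c+1, r) ∉ T)
    (hfull : ∀ s, r' < s → s < r → (c, s) ∈ T)
    (hj1 : r' < j) (hj2 : j ≤ r) : 1 ≤ mval T (c+1) j := by
  obtain ⟨hfin, _, hM⟩ := hG
  obtain ⟨d, rfl⟩ : ∃ d, r = j + d := ⟨r - j, by omega⟩
  have hX := Ncnt_full hfin c j (d+1) (by
    intro s hs1 hs2
    rcases eq_or_lt_of_le (show s ≤ j + d by omega) with h | h
    · exact h ▸ hcell
    · exact hfull s (by omega) h)
  rw [show j + (d+1) = j + d + 1 by omega] at hX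
  have hY1 := Ncnt_le hfin (c+1) j d
  have hY2 := Ncnt_step hfin (c+1) (j+d)
  rw [if_neg hright] at hY2
  have hm := hM (c+1) (j+d+1) (by omega) (by omega)
  rw [mval_eq] at hm ⊢
  simp only [Nat.add_sub_cancel] at hm ⊢
  omega

lemma good_move {T S : Diagram} (h : KohnertMove T S) (hG : Good T) : Good S := by
  obtain ⟨c, r, r', hcell, hright, hr'1, hr'r, hnotmem, hfull, hS⟩ := h
  obtain ⟨hfin, hpos, hM⟩ := hG
  have hfin' : S.Finite := hS ▸ ((hfin.diff (t := {(c,r)})).insert _)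
  have hxnot : (c, r') ∉ T \ {(c, r)} := fun hc => hnotmem hc.1
  have hNS : ∀ c' j, Ncnt S c' j + (if c = c' ∧ j ≤ r then 1 else 0)
      = Ncnt T c' j + (if c = c' ∧ j ≤ r' then 1 else 0) := by
    intro c' j
    have e1 : Ncnt S c' j = Ncnt (T \ {(c,r)}) c' j + (if c = c' ∧ j ≤ r' then 1 else 0) := by
      rw [hS]; exact Ncnt_insert hfin.diff hxnot c' j
    have e2 : Ncnt T c' j = Ncnt (T \ {(c,r)}) c' j + (if c = c' ∧ j ≤ r then 1 else 0) :=
      Ncnt_remove hfin hcell c' j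
    omega
  have hposS : ∀ p ∈ S, 1 ≤ p.1 ∧ 1 ≤ p.2 := by
    rw [hS]
    rintro p (rfl | hp)
    · exact ⟨(hpos _ hcell).1, hr'1⟩
    · exact hpos _ hp.1
  refine ⟨hfin', hposS, ?_⟩
  intro i j hi hj
  have hm := hM i j hi hj
  rw [mval_eq] at hm ⊢
  by_cases hic : i = c + 1
  · subst hic
    have hi1 : c + 1 - 1 = c := by omega
    rw [hi1] at hm ⊢
    have e1' : Ncnt S c j + (if j ≤ r then 1 else 0)
        = Ncnt T c j + (if j ≤ r' then 1 else 0) := by simpa using hNS c j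
    have e2 := hNS (c+1) j
    rw [if_neg (by omega), if_neg (by omega)] at e2
    by_cases hcase : r' < j ∧ j ≤ r
    · have hkey := forward_key ⟨hfin, hpos, hM⟩ (hpos _ hcell).1 hcell
        (fun hc => by have := hright _ hc; omega) hfull hcase.1 hcase.2
      rw [mval_eq] at hkey
      simp only [Nat.add_sub_cancel] at hkey
      split_ifs at e1' <;> omega
    · split_ifs at e1' <;> omega
  · by_cases hic2 : i = c
    · subst hic2
      have e2' : Ncnt S i j + (if j ≤ r then 1 else 0)
          = Ncnt T i j + (if j ≤ r' then 1 else 0) := by simpa using hNS i j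
      have e1 := hNS (i-1) j
      rw [if_neg (by omega), if_neg (by omega)] at e1
      split_ifs at e2' <;> omega
    · have e1 := hNS (i-1) j
      have e2 := hNS i j
      rw [if_neg (by omega), if_neg (by omega)] at e1
      rw [if_neg (by omega), if_neg (by omega)] at e2
      omega

lemma good_of_generic {T : Diagram} (h : GenericKD T) : Good T := by
  obtain ⟨a, hbd, hKD⟩ := h
  induction hKD with
  | refl => exact good_key hbd
  | tail _ h2 ih => exact good_move h2 ih

noncomputable def height (T : Diagram) : ℕ := sSup (Prod.snd '' T)
noncomputable def rowsum (T : Diagram) : ℕ := ∑ᶠ p ∈ T, p.2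

lemma le_height {T : Diagram} (hT : T.Finite) {p : ℕ × ℕ} (hp : p ∈ T) : p.2 ≤ height T :=
  le_csSup ((hT.image _).bddAbove) ⟨p, hp, rfl⟩

lemma height_le {T : Diagram} {m : ℕ} (h : ∀ p ∈ T, p.2 ≤ m) : height T ≤ m := by
  rcases T.eq_empty_or_nonempty with rfl | hne
  · simp only [height, Set.image_empty]
    exact le_trans (le_of_eq csSup_empty) (Nat.zero_le m)
  · exact csSup_le (hne.image _) (by rintro v ⟨p, hp, rfl⟩; exact h p hp)

lemma rowsum_insert {T : Diagram} (hT : T.Finite) {x : ℕ × ℕ} (hx : x ∉ T) :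
    rowsum (insert x T) = x.2 + rowsum T :=
  finsum_mem_insert _ hx hT

lemma rowsum_remove {T : Diagram} (hT : T.Finite) {y : ℕ × ℕ} (hy : y ∈ T) :
    rowsum T = y.2 + rowsum (T \ {y}) := by
  have h1 : insert y (T \ {y}) = T := by
    rw [Set.insert_diff_singleton, Set.insert_eq_self.mpr hy]
  conv_lhs => rw [← h1]
  exact rowsum_insert hT.diff (by simp)

lemma rowsum_le {T : Diagram} (hT : T.Finite) : rowsum T ≤ T.ncard * height T := by
  have hfin2 : (T ∩ Function.support Prod.snd).Finite := hT.inter_of_left _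
  have h1 : rowsum T = ∑ p ∈ hfin2.toFinset, p.2 := finsum_mem_eq_sum _ hfin2
  rw [h1]
  calc ∑ p ∈ hfin2.toFinset, p.2 ≤ hfin2.toFinset.card • height T := by
        apply Finset.sum_le_card_nsmul
        intro p hp
        exact le_height hT (hfin2.mem_toFinset.mp hp).1
    _ = hfin2.toFinset.card * height T := by rw [smul_eq_mul]
    _ ≤ T.ncard * height T := by
        apply Nat.mul_le_mul_right
        rw [← Set.ncard_eq_toFinset_card _ hfin2]
        exact Set.ncard_le_ncard Set.inter_subset_left hT

def LeftJustified (T : Diagram) : Prop := ∀ p ∈ T, 2 ≤ p.1 → (p.1 - 1, p.2) ∈ T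

lemma leftJustified_generic {T : Diagram} (hT : T.Finite)
    (hpos : ∀ p ∈ T, 1 ≤ p.1 ∧ 1 ≤ p.2) (hLJ : LeftJustified T) : GenericKD T := by
  -- downward closure of rows
  have hdown : ∀ d c r, (c, r) ∈ T → 1 ≤ c - d → (c - d, r) ∈ T := by
    intro d
    induction d with
    | zero => intro c r h _; simpa using h
    | succ d ih =>
      intro c r h hge
      have h1 : (c - d, r) ∈ T := ih c r h (by omega)
      have h2 : 2 ≤ c - d := by omega
      have h3 := hLJ _ h1 h2
      simpa [show c - d - 1 = c - (d+1) by omega] using h3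
  set a : ℕ → ℕ := fun r => {c | (c, r) ∈ T}.ncard with ha
  have hrowfin : ∀ r, {c | (c, r) ∈ T}.Finite := by
    intro r
    apply Set.Finite.preimage (f := fun c => (c, r)) _ hT
    intro u _ v _ huv
    simpa using congrArg Prod.fst huv
  have hIcc : ∀ (k : ℕ), (Set.Icc 1 k).ncard = k := by
    intro k
    rw [← Finset.coe_Icc, Set.ncard_coe_finset, Nat.card_Icc]
    omega
  have hrow : ∀ c r, 1 ≤ c → ((c, r) ∈ T ↔ c ≤ a r) := by
    intro c r hc
    constructor
    · intro h
      have hsub : Set.Icc 1 c ⊆ {c' | (c', r) ∈ T} := by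
        intro k hk
        simp only [Set.mem_Icc] at hk
        have := hdown (c - k) c r h (by omega)
        simpa [show c - (c - k) = k by omega] using this
      calc c = (Set.Icc 1 c).ncard := (hIcc c).symm
        _ ≤ a r := Set.ncard_le_ncard hsub (hrowfin r)
    · intro h
      simp only [ha] at h
      by_contra hmem
      have hsub : {c' | (c', r) ∈ T} ⊆ Set.Icc 1 (c - 1) := by
        intro k hk
        simp only [Set.mem_setOf_eq] at hk
        simp only [Set.mem_Icc]
        refine ⟨(hpos _ hk).1, ?_⟩
        by_contra hkc
        have := hdown (k - c) k r hk (by omega)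
        rw [show k - (k - c) = c by omega] at this
        exact hmem this
      have := Set.ncard_le_ncard hsub (Set.finite_Icc _ _)
      rw [hIcc] at this
      omega
  refine ⟨a, ⟨height T, ?_⟩, ?_⟩
  · intro r hr
    have : {c | (c, r) ∈ T} = ∅ := by
      ext c
      simp only [Set.mem_setOf_eq, Set.mem_empty_iff_false, iff_false]
      intro h
      have := le_height hT h
      simp only at this
      omega
    simp [ha, this]
  · have hTkey : T = keyDiagram a := by
      ext ⟨c, r⟩
      constructor
      · intro h
        exact ⟨(hpos _ h).1, (hpos _ h).2, (hrow c r (hpos _ h).1).mp h⟩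
      · rintro ⟨h1, h2, h3⟩
        exact (hrow c r h1).mpr h3
    rw [hTkey]
    exact Relation.ReflTransGen.refl

lemma backward_key {T : Diagram} (hfin : T.Finite) (hM : Mnn T) {c r j : ℕ}
    (hc : 2 ≤ c) (hr : 1 ≤ r) (hcell : (c, r) ∈ T) (hhole : (c - 1, r) ∉ T)
    (hfull : ∀ s, r < s → s < j → (c, s) ∈ T) (hj : r < j) : 1 ≤ mval T c j := by
  obtain ⟨d, rfl⟩ : ∃ d, j = r + 1 + d := ⟨j - (r+1), by omega⟩
  have hB := Ncnt_full hfin c r (d+1) (by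
    intro s hs1 hs2
    rcases eq_or_lt_of_le hs1 with h | h
    · exact h ▸ hcell
    · exact hfull s h (by omega))
  rw [show r + (d+1) = r + 1 + d by omega] at hB
  have hA1 := Ncnt_step hfin (c-1) r
  rw [if_neg hhole] at hA1
  have hA2 := Ncnt_le hfin (c-1) (r+1) d
  rw [show r + 1 + d = r + 1 + d by omega] at hA2
  have hm := hM c r (by omega) hr
  rw [mval_eq] at hm ⊢
  omega

lemma backward_step {T : Diagram} (hG : Good T) (hnLJ : ¬ LeftJustified T) :
    ∃ S, Good S ∧ KohnertMove S T ∧ S.ncard = T.ncard ∧ height S ≤ height T ∧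
      rowsum T < rowsum S := by
  obtain ⟨hfin, hpos, hM⟩ := hG
  -- the set of holes
  have hHne : {p : ℕ × ℕ | p ∈ T ∧ 2 ≤ p.1 ∧ (p.1 - 1, p.2) ∉ T}.Nonempty := by
    rw [LeftJustified] at hnLJ
    push_neg at hnLJ
    obtain ⟨p, h1, h2, h3⟩ := hnLJ
    exact ⟨p, h1, h2, h3⟩
  obtain ⟨q, hqmem, hqmax⟩ := Set.Finite.exists_maximalFor Prod.fst _
    (hfin.subset (fun p hp => hp.1)) hHne
  obtain ⟨hqT, hq2, hqhole⟩ := hqmem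
  set c := q.1 with hc
  set r := q.2 with hr
  have hq : q = (c, r) := rfl
  rw [hq] at hqT
  have hmaxcol : ∀ z : ℕ × ℕ, z ∈ T → 2 ≤ z.1 → (z.1 - 1, z.2) ∉ T → z.1 ≤ c := by
    intro z h1 h2 h3
    rcases le_total z.1 c with h | h
    · exact h
    · exact hqmax ⟨h1, h2, h3⟩ h
  have hr1 : 1 ≤ r := (hpos _ hqT).2
  -- the landing row r₀
  have hgapne : {s | r < s ∧ (c, s) ∉ T}.Nonempty := by
    refine ⟨height T + 1, ?_, ?_⟩
    · have := le_height hfin hqT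
      omega
    · intro hmem
      have := le_height hfin hmem
      simp only at this
      omega
  set r₀ := sInf {s | r < s ∧ (c, s) ∉ T} with hr₀def
  obtain ⟨hrr₀, hr₀notmem⟩ := Nat.sInf_mem hgapne
  have hfullbelow : ∀ s, r < s → s < r₀ → (c, s) ∈ T := by
    intro s hs1 hs2
    by_contra hmem
    exact Nat.notMem_of_lt_sInf hs2 ⟨hs1, hmem⟩
  -- key inequalities in column c
  have hkey : ∀ j, r < j → j ≤ r₀ → 1 ≤ mval T c j := by
    intro j h1 h2
    exact backward_key hfin hM hq2 hr1 hqT hqhole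
      (fun s hs1 hs2 => hfullbelow s hs1 (by omega)) h1
  -- r₀ is at most the height
  have hr₀height : r₀ ≤ height T := by
    have h1 := hkey r₀ hrr₀ le_rfl
    rw [mval_eq] at h1
    have h2 : 1 ≤ Ncnt T (c-1) r₀ := by omega
    have h3 : {p : ℕ × ℕ | p ∈ T ∧ p.1 = c - 1 ∧ r₀ ≤ p.2}.Nonempty := by
      by_contra hne
      rw [Set.not_nonempty_iff_eq_empty] at hne
      rw [Ncnt, hne, Set.ncard_empty] at h2
      omega
    obtain ⟨p, hp1, _, hp3⟩ := h3
    exact le_trans hp3 (le_height hfin hp1)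
  set S : Diagram := insert (c, r₀) (T \ {(c, r)}) with hSdef
  have hxnot : (c, r₀) ∉ T \ {(c, r)} := fun h => hr₀notmem h.1
  have hfinS : S.Finite := hfin.diff.insert _
  -- S-to-T is a Kohnert move
  have hrightmost : ∀ c', (c', r₀) ∈ S → c' ≤ c := by
    intro c' hc'
    rcases hc' with h | h
    · rw [show c' = (c', r₀).1 from rfl, h]
    · have hcT : (c', r₀) ∈ T := h.1
      by_contra hgt
      push_neg at hgt
      have hdesc : ∀ d c'', c'' = c + d → (c'', r₀) ∈ T → (c, r₀) ∈ T := by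
        intro d
        induction d with
        | zero => intro c'' he hm; rwa [show c'' = c by omega] at hm
        | succ d ih =>
          intro c'' he hm
          by_cases hmem : (c'' - 1, r₀) ∈ T
          · exact ih (c'' - 1) (by omega) hmem
          · have := hmaxcol (c'', r₀) hm (by simp; omega) hmem
            simp only at this
            omega
      exact hr₀notmem (hdesc (c' - c) c' (by omega) hcT)
  have hback : T = insert (c, r) (S \ {(c, r₀)}) := by
    ext p
    constructor
    · intro hp
      by_cases hpq : p = (c, r)
      · exact Or.inl hpq
      · refine Or.inr ⟨Or.inr ⟨hp, by simpa using hpq⟩, ?_⟩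
        simp only [Set.mem_singleton_iff]
        rintro rfl
        exact hr₀notmem hp
    · rintro (rfl | ⟨hpS, hpne⟩)
      · exact hqT
      · rcases hpS with h | h
        · exact absurd h hpne
        · exact h.1
  have hmove : KohnertMove S T := by
    refine ⟨c, r₀, r, Or.inl rfl, hrightmost, hr1, hrr₀, ?_, ?_, hback⟩
    · intro hmem
      rcases hmem with h | h
      · have := congrArg Prod.snd h
        simp only at this
        omega
      · exact h.2 rfl
    · intro s h1 h2
      refine Or.inr ⟨hfullbelow s h1 h2, ?_⟩
      simp only [Set.mem_singleton_iff, Prod.mk.injEq]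
      rintro ⟨-, h⟩
      omega
  -- invariants of S
  have hNS : ∀ c' j, Ncnt S c' j + (if c = c' ∧ j ≤ r then 1 else 0)
      = Ncnt T c' j + (if c = c' ∧ j ≤ r₀ then 1 else 0) := by
    intro c' j
    have e1 : Ncnt S c' j = Ncnt (T \ {(c,r)}) c' j + (if c = c' ∧ j ≤ r₀ then 1 else 0) :=
      Ncnt_insert hfin.diff hxnot c' j
    have e2 : Ncnt T c' j = Ncnt (T \ {(c,r)}) c' j + (if c = c' ∧ j ≤ r then 1 else 0) :=
      Ncnt_remove hfin hqT c' j
    omega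
  have hposS : ∀ p ∈ S, 1 ≤ p.1 ∧ 1 ≤ p.2 := by
    rintro p (rfl | hp)
    · exact ⟨by omega, by omega⟩
    · exact hpos _ hp.1
  have hMS : Mnn S := by
    intro i j hi hj
    have hm := hM i j hi hj
    rw [mval_eq] at hm ⊢
    by_cases hic : i = c + 1
    · subst hic
      have hi1 : c + 1 - 1 = c := by omega
      rw [hi1] at hm ⊢
      have e1' : Ncnt S c j + (if j ≤ r then 1 else 0)
          = Ncnt T c j + (if j ≤ r₀ then 1 else 0) := by simpa using hNS c j
      have e2 := hNS (c+1) j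
      rw [if_neg (by omega), if_neg (by omega)] at e2
      split_ifs at e1' <;> omega
    · by_cases hic2 : i = c
      · subst hic2
        have e2' : Ncnt S c j + (if j ≤ r then 1 else 0)
            = Ncnt T c j + (if j ≤ r₀ then 1 else 0) := by simpa using hNS c j
        have e1 := hNS (c-1) j
        rw [if_neg (by omega), if_neg (by omega)] at e1
        by_cases hcase : r < j ∧ j ≤ r₀
        · have hk := hkey j hcase.1 hcase.2
          rw [mval_eq] at hk
          split_ifs at e2' <;> omega
        · split_ifs at e2' <;> omega
      · have e1 := hNS (i-1) j
        have e2 := hNS i j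
        rw [if_neg (by omega), if_neg (by omega)] at e1
        rw [if_neg (by omega), if_neg (by omega)] at e2
        omega
  have hcard : S.ncard = T.ncard := by
    rw [hSdef, Set.ncard_insert_of_notMem hxnot hfin.diff]
    exact Set.ncard_diff_singleton_add_one hqT hfin
  have hheight : height S ≤ height T := by
    apply height_le
    rintro p (rfl | hp)
    · exact hr₀height
    · exact le_height hfin hp.1
  have hrowsum : rowsum T < rowsum S := by
    have h1 : rowsum S = r₀ + rowsum (T \ {(c, r)}) := rowsum_insert hfin.diff hxnot
    have h2 : rowsum T = r + rowsum (T \ {(c, r)}) := rowsum_remove hfin hqT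
    omega
  exact ⟨S, ⟨hfinS, hposS, hMS⟩, hmove, hcard, hheight, hrowsum⟩

lemma generic_of_good_aux : ∀ k (T : Diagram), Good T → T.ncard * height T ≤ rowsum T + k → GenericKD T := by
  intro k
  induction k with
  | zero =>
    intro T hG hle
    by_cases hLJ : LeftJustified T
    · exact leftJustified_generic hG.1 hG.2.1 hLJ
    · obtain ⟨S, hGS, hmove, hcard, hh, hrs⟩ := backward_step hG hLJ
      have h1 := rowsum_le hGS.1
      have h2 : S.ncard * height S ≤ T.ncard * height T := Nat.mul_le_mul (le_of_eq hcard) hh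
      omega
  | succ k ih =>
    intro T hG hle
    by_cases hLJ : LeftJustified T
    · exact leftJustified_generic hG.1 hG.2.1 hLJ
    · obtain ⟨S, hGS, hmove, hcard, hh, hrs⟩ := backward_step hG hLJ
      have h2 : S.ncard * height S ≤ T.ncard * height T := Nat.mul_le_mul (le_of_eq hcard) hh
      obtain ⟨a, hbd, hKD⟩ := ih S hGS (by omega)
      exact ⟨a, hbd, hKD.tail hmove⟩

lemma generic_of_good {T : Diagram} (hG : Good T) : GenericKD T :=
  generic_of_good_aux (T.ncard * height T) T hG (by omega)


/-- A weak but not generic Kohnert diagram has a unique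
removable column `c > 1`, characterized by the values of `m_T`, and unique
highest and lowest removable cells. -/
theorem statement15 (T : Diagram) (hfin : T.Finite)
    (hpos : ∀ p ∈ T, 1 ≤ p.1 ∧ 1 ≤ p.2)
    (hweak : WeakKD T) (hng : ¬ GenericKD T) :
    (∃! c, IsRemovableCol T c) ∧
    (∀ c, IsRemovableCol T c → 1 < c) ∧
    (∀ c, 1 < c →
      (IsRemovableCol T c ↔
        ((∃ r, 1 ≤ r ∧ mval T c r = -1) ∧ (∀ r, 1 ≤ r → -1 ≤ mval T c r) ∧
          ∀ i, 1 < i → i ≠ c → ∀ r, 1 ≤ r → 0 ≤ mval T i r))) ∧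
    (∃! x : ℕ × ℕ, Removable T x ∧ ∀ y, Removable T y → y.2 ≤ x.2) ∧
    (∃! x : ℕ × ℕ, Removable T x ∧ ∀ y, Removable T y → x.2 ≤ y.2) := by
  have hMnn_imp : Mnn T → False := fun hM => hng (generic_of_good ⟨hfin, hpos, hM⟩)
  have hP : ∀ x, Removable T x → ∀ i j, 1 < i → 1 ≤ j → i ≠ x.1 → 0 ≤ mval T i j := by
    intro x hx i j hi hj hne
    have hM' := (good_of_generic hx.2).2.2 i j hi hj
    have e1 := Ncnt_remove hfin hx.1 (i-1) j
    have e2 := Ncnt_remove hfin hx.1 i j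
    rw [mval_eq] at hM' ⊢
    rw [if_neg (by omega)] at e2
    split_ifs at e1 <;> omega
  have hQ : ∀ x, Removable T x → 1 < x.1 → ∀ j, 1 ≤ j → -1 ≤ mval T x.1 j := by
    intro x hx hx1 j hj
    have hM' := (good_of_generic hx.2).2.2 x.1 j hx1 hj
    have e1 := Ncnt_remove hfin hx.1 (x.1 - 1) j
    have e2 := Ncnt_remove hfin hx.1 x.1 j
    rw [mval_eq] at hM' ⊢
    rw [if_neg (by omega)] at e1
    split_ifs at e2 <;> omega
  have hcol1 : ∀ x, Removable T x → 1 < x.1 := by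
    intro x hx
    by_contra hle
    exact hMnn_imp (fun i j hi hj => hP x hx i j hi hj (by omega))
  have hcoleq : ∀ x y, Removable T x → Removable T y → x.1 = y.1 := by
    intro x y hx hy
    by_contra hne
    apply hMnn_imp
    intro i j hi hj
    by_cases h : i = x.1
    · exact hP y hy i j hi hj (by omega)
    · exact hP x hx i j hi hj h
  have hexneg : ∀ x, Removable T x → ∃ j, 1 ≤ j ∧ mval T x.1 j = -1 := by
    intro x hx
    by_contra hno
    push_neg at hno
    apply hMnn_imp
    intro i j hi hj
    by_cases h : i = x.1
    · subst h
      have h1 := hQ x hx (hcol1 x hx) j hj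
      have h2 := hno j hj
      omega
    · exact hP x hx i j hi hj h
  obtain ⟨x₀, hx₀⟩ := hweak
  have hRfin : {x | Removable T x}.Finite := hfin.subset (fun x hx => hx.1)
  have hRne : {x | Removable T x}.Nonempty := ⟨x₀, hx₀⟩
  obtain ⟨xM, hxM, hMmax⟩ := Set.Finite.exists_maximalFor Prod.snd _ hRfin hRne
  obtain ⟨xm, hxm, hmmin⟩ := Set.Finite.exists_minimalFor Prod.snd _ hRfin hRne
  have hMdom : ∀ y, Removable T y → y.2 ≤ xM.2 := by
    intro y hy
    rcases le_total y.2 xM.2 with h | h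
    · exact h
    · exact hMmax hy h
  have hmdom : ∀ y, Removable T y → xm.2 ≤ y.2 := by
    intro y hy
    rcases le_total xm.2 y.2 with h | h
    · exact h
    · exact hmmin hy h
  refine ⟨⟨x₀.1, ⟨x₀, hx₀, rfl⟩, ?_⟩, ?_, ?_, ?_, ?_⟩
  · rintro c ⟨y, hy, rfl⟩
    exact hcoleq y x₀ hy hx₀
  · rintro c ⟨y, hy, rfl⟩
    exact hcol1 y hy
  · intro c hc
    constructor
    · rintro ⟨y, hy, rfl⟩
      exact ⟨hexneg y hy, fun j hj => hQ y hy (hcol1 y hy) j hj,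
        fun i hi hne j hj => hP y hy i j hi hj hne⟩
    · rintro ⟨⟨j₁, hj₁, hneg⟩, _, _⟩
      have hcc : c = x₀.1 := by
        by_contra hne
        have := hP x₀ hx₀ c j₁ hc hj₁ hne
        omega
      exact ⟨x₀, hx₀, hcc.symm⟩
  · refine ⟨xM, ⟨hxM, hMdom⟩, ?_⟩
    rintro z ⟨hz, hzdom⟩
    exact Prod.ext (hcoleq z xM hz hxM) (le_antisymm (hMdom z hz) (hzdom xM hxM))
  · refine ⟨xm, ⟨hxm, hmdom⟩, ?_⟩
    rintro z ⟨hz, hzdom⟩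
    exact Prod.ext (hcoleq z xm hz hxm) (le_antisymm (hzdom xm hxm) (hmdom z hz))
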